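/- Let z ∈ (0, 1) and take the five-point scheme with σ = 0 and τ = −(1 − z²)/12. Let Φ : ℤ → ℝ be square-summable over j ≤ 0 and satisfy the type-1 second-order extrapolation conditions (ΔΦ)₀ = 0 and (D₀ΔΦ)₀ = 0 (these determine the ghost values Φ₁ = 2Φ₀ − Φ_{−1} and Φ₂ = 4Φ₀ − 4Φ_{−1} + Φ_{−2}). Define Ψ_j := (A(z)Φ)_j for j ≤ 0. Then ∑_{j ≤ −1} Ψ_j² + (1/2)·Ψ₀² ≤ ∑_{j ≤ −1} Φ_j² + (1/2)·Φ₀²; that is, the scheme with this boundary closure is semi-bounded for the weighted norm with weight 1/2 at j = 0. -/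

import Mathlib

/-- Backward difference `(DΦ)_j = Φ_j - Φ_{j-1}`. -/
noncomputable def Dd (Φ : ℤ → ℝ) (j : ℤ) : ℝ := Φ j - Φ (j - 1)

/-- Centered difference `(D₀Φ)_j = (Φ_{j+1} - Φ_{j-1})/2`. -/
noncomputable def D0 (Φ : ℤ → ℝ) (j : ℤ) : ℝ := (Φ (j + 1) - Φ (j - 1)) / 2

/-- Discrete Laplacian `(ΔΦ)_j = Φ_{j-1} - 2Φ_j + Φ_{j+1}`. -/
noncomputable def Lap (Φ : ℤ → ℝ) (j : ℤ) : ℝ := Φ (j - 1) - 2 * Φ j + Φ (j + 1)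

/-- `(DΔΦ)_j = (ΔΦ)_j - (ΔΦ)_{j-1}`. -/
noncomputable def DLap (Φ : ℤ → ℝ) (j : ℤ) : ℝ := Lap Φ j - Lap Φ (j - 1)

/-- `(D₀ΔΦ)_j = (-Φ_{j-2} + 2Φ_{j-1} - 2Φ_{j+1} + Φ_{j+2})/2`. -/
noncomputable def D0Lap (Φ : ℤ → ℝ) (j : ℤ) : ℝ :=
  (-Φ (j - 2) + 2 * Φ (j - 1) - 2 * Φ (j + 1) + Φ (j + 2)) / 2

/-- `(Δ²Φ)_j = Φ_{j-2} - 4Φ_{j-1} + 6Φ_j - 4Φ_{j+1} + Φ_{j+2}`. -/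
noncomputable def Lap2 (Φ : ℤ → ℝ) (j : ℤ) : ℝ :=
  Φ (j - 2) - 4 * Φ (j - 1) + 6 * Φ j - 4 * Φ (j + 1) + Φ (j + 2)

/-- The five point scheme `A(z)Φ = Φ - z D₀Φ + (z²/2) ΔΦ + σ D₀ΔΦ + τ Δ²Φ`. -/
noncomputable def A5 (z σ τ : ℝ) (Φ : ℤ → ℝ) (j : ℤ) : ℝ :=
  Φ j - z * D0 Φ j + z ^ 2 / 2 * Lap Φ j + σ * D0Lap Φ j + τ * Lap2 Φ j

/-- The discrete "flux" used in the summation-by-parts argument. -/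
noncomputable def Fflux (z : ℝ) (Φ : ℤ → ℝ) (j : ℤ) : ℝ :=
    (-(1 - z ^ 2) ^ 2 / 72) * Φ (j - 2) ^ 2
  + (1 / 12 + z / 12 - z ^ 2 / 12 - z ^ 3 / 12) * (Φ (j - 2) * Φ (j - 1))
  + ((1 - z ^ 2) ^ 2 / 12) * (Φ (j - 2) * Φ j)
  + (1 / 36 - z / 12 + z ^ 2 / 36 + z ^ 3 / 12 - z ^ 4 / 18) * (Φ (j - 2) * Φ (j + 1))
  + (-5 / 24 - z / 3 - 7 * z ^ 2 / 24 - z ^ 3 / 6) * Φ (j - 1) ^ 2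
  + (-1 / 12 - 5 * z / 12 + z ^ 2 / 12 + 5 * z ^ 3 / 12) * (Φ (j - 1) * Φ j)
  + ((z ^ 2 - 1) / 12) * (Φ (j - 1) * Φ (j + 1))
  + (3 / 8 - z / 3 + z ^ 2 / 4 - z ^ 3 / 6 - z ^ 4 / 8) * Φ j ^ 2
  + (-1 / 4 + z / 12 + z ^ 2 / 12 - z ^ 3 / 12 + z ^ 4 / 6) * (Φ j * Φ (j + 1))
  + (5 / 72 - z ^ 2 / 72 - z ^ 4 / 18) * Φ (j + 1) ^ 2

/-- The local dissipation density (a nonnegative quantity for `0 < z < 1`). -/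
noncomputable def Gq (z : ℝ) (Φ : ℤ → ℝ) (j : ℤ) : ℝ :=
  (1 - z ^ 2) / 144 *
    ( (6 + 9 * z ^ 2) * (Lap Φ j + Lap Φ (j + 1)) ^ 2
    + (2 + z ^ 2) * (Lap Φ (j + 1) - Lap Φ j) ^ 2
    + (1 - z ^ 2) * (Lap Φ (j + 1) - Lap Φ (j - 1)) ^ 2 )

lemma local_id (z : ℝ) (Φ : ℤ → ℝ) (j : ℤ) :
    Φ j ^ 2 - (A5 z 0 (-(1 - z ^ 2) / 12) Φ j) ^ 2
      = Gq z Φ j + (Fflux z Φ j - Fflux z Φ (j + 1)) := by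
  have e1 : j + 1 - 2 = j - 1 := by ring
  have e2 : j + 1 - 1 = j := by ring
  have e3 : j + 1 + 1 = j + 2 := by ring
  have e4 : j - 1 - 1 = j - 2 := by ring
  have e5 : j - 1 + 1 = j := by ring
  simp only [A5, D0, Lap, D0Lap, Lap2, Gq, Fflux, e1, e2, e3, e4, e5]
  ring

lemma boundary_id (z : ℝ) (Φ : ℤ → ℝ) (hext1 : Lap Φ 0 = 0) (hext2 : D0Lap Φ 0 = 0) :
    Fflux z Φ 0
      = (Φ 0 ^ 2 - (A5 z 0 (-(1 - z ^ 2) / 12) Φ 0) ^ 2) / 2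
        - z / 2 * ((z * Φ (-1) + (1 - z) * Φ 0) ^ 2 + Φ 0 ^ 2) := by
  simp only [Lap] at hext1
  simp only [D0Lap] at hext2
  norm_num at hext1 hext2
  have hΦ1 : Φ 1 = 2 * Φ 0 - Φ (-1) := by linarith
  have hΦ2 : Φ 2 = 4 * Φ 0 - 4 * Φ (-1) + Φ (-2) := by linarith
  simp only [A5, D0, Lap, D0Lap, Lap2, Fflux]
  norm_num [hΦ1, hΦ2]
  ring

lemma Gq_nonneg {z : ℝ} (hz : z ∈ Set.Ioo (0 : ℝ) 1) (Φ : ℤ → ℝ) (j : ℤ) :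
    0 ≤ Gq z Φ j := by
  obtain ⟨hz0, hz1⟩ := hz
  have h1 : (0:ℝ) ≤ 1 - z ^ 2 := by nlinarith
  refine mul_nonneg (by positivity) ?_
  have a1 : (0:ℝ) ≤ (6 + 9 * z ^ 2) * (Lap Φ j + Lap Φ (j + 1)) ^ 2 := by positivity
  have a2 : (0:ℝ) ≤ (2 + z ^ 2) * (Lap Φ (j + 1) - Lap Φ j) ^ 2 := by positivity
  have a3 : (0:ℝ) ≤ (1 - z ^ 2) * (Lap Φ (j + 1) - Lap Φ (j - 1)) ^ 2 :=
    mul_nonneg h1 (sq_nonneg _)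
  linarith

lemma telescopeF (E : ℤ → ℝ) (N : ℕ) :
    ∑ n ∈ Finset.range N, (E (-(n:ℤ) - 1) - E (-(n:ℤ) - 1 + 1)) = E (-(N:ℤ)) - E 0 := by
  induction N with
  | zero => simp
  | succ n ih =>
    have h1 : (-(n:ℤ) - 1 + 1 : ℤ) = -(n:ℤ) := by ring
    have h2 : (-((n+1 : ℕ):ℤ) : ℤ) = -(n:ℤ) - 1 := by push_cast; ring
    rw [Finset.sum_range_succ, ih, h1, h2]
    ring

lemma key_ineq {z : ℝ} (hz : z ∈ Set.Ioo (0 : ℝ) 1) (Φ : ℤ → ℝ)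
    (hext1 : Lap Φ 0 = 0) (hext2 : D0Lap Φ 0 = 0) (N : ℕ) :
    ∑ n ∈ Finset.range N, (A5 z 0 (-(1 - z ^ 2) / 12) Φ (-(n:ℤ) - 1)) ^ 2
        + 1 / 2 * (A5 z 0 (-(1 - z ^ 2) / 12) Φ 0) ^ 2
      ≤ ∑ n ∈ Finset.range N, (Φ (-(n:ℤ) - 1)) ^ 2 + 1 / 2 * (Φ 0) ^ 2
        - Fflux z Φ (-(N:ℤ)) := by
  have hsum : ∑ n ∈ Finset.range N,
        (Φ (-(n:ℤ) - 1) ^ 2 - (A5 z 0 (-(1 - z ^ 2) / 12) Φ (-(n:ℤ) - 1)) ^ 2)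
      = ∑ n ∈ Finset.range N, Gq z Φ (-(n:ℤ) - 1)
        + (Fflux z Φ (-(N:ℤ)) - Fflux z Φ 0) := by
    rw [← telescopeF (Fflux z Φ) N, ← Finset.sum_add_distrib]
    exact Finset.sum_congr rfl fun n _ => local_id z Φ (-(n:ℤ) - 1)
  have hG : 0 ≤ ∑ n ∈ Finset.range N, Gq z Φ (-(n:ℤ) - 1) :=
    Finset.sum_nonneg fun n _ => Gq_nonneg hz Φ _
  have hb := boundary_id z Φ hext1 hext2
  have hd : 0 ≤ z / 2 * ((z * Φ (-1) + (1 - z) * Φ 0) ^ 2 + Φ 0 ^ 2) := by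
    have := hz.1
    positivity
  have hexpand : ∑ n ∈ Finset.range N,
        (Φ (-(n:ℤ) - 1) ^ 2 - (A5 z 0 (-(1 - z ^ 2) / 12) Φ (-(n:ℤ) - 1)) ^ 2)
      = ∑ n ∈ Finset.range N, Φ (-(n:ℤ) - 1) ^ 2
        - ∑ n ∈ Finset.range N, (A5 z 0 (-(1 - z ^ 2) / 12) Φ (-(n:ℤ) - 1)) ^ 2 :=
    Finset.sum_sub_distrib _ _
  rw [hexpand] at hsum
  linarith


def negE : ℕ ≃ {j : ℤ // j ≤ -1} where
  toFun n := ⟨-(n:ℤ) - 1, by omega⟩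
  invFun j := (-j.1 - 1).toNat
  left_inv n := by
    simp only
    rw [show (-(-(n:ℤ) - 1) - 1) = (n:ℤ) by ring]
    exact Int.toNat_natCast n
  right_inv j := by
    ext
    simp only
    rw [Int.toNat_of_nonneg (by omega : (0:ℤ) ≤ -j.1 - 1)]
    ring

lemma tsum_negE (f : ℤ → ℝ) :
    (∑' j : {j : ℤ // j ≤ -1}, f j.1) = ∑' n : ℕ, f (-(n:ℤ) - 1) := by
  rw [← Equiv.tsum_eq negE (fun j : {j : ℤ // j ≤ -1} => f j.1)]
  rfl

lemma summable_shift1 (f : ℤ → ℝ) (h : Summable fun j : {j : ℤ // j ≤ 0} => f j.1) :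
    Summable fun n : ℕ => f (-(n:ℤ) - 1) := by
  have hinj : Function.Injective (fun n : ℕ => (⟨-(n:ℤ) - 1, by omega⟩ : {j : ℤ // j ≤ 0})) := by
    intro a b hab
    simp only [Subtype.mk.injEq] at hab
    omega
  exact h.comp_injective hinj

lemma summable_shift0 (f : ℤ → ℝ) (h : Summable fun j : {j : ℤ // j ≤ 0} => f j.1) :
    Summable fun n : ℕ => f (-(n:ℤ)) := by
  have hinj : Function.Injective (fun n : ℕ => (⟨-(n:ℤ), by omega⟩ : {j : ℤ // j ≤ 0})) := by
    intro a b hab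
    simp only [Subtype.mk.injEq] at hab
    omega
  exact h.comp_injective hinj

/-- Semi-boundedness of the five point scheme with `σ = 0`, `τ = -(1 - z²)/12`
under the type-1 second order extrapolation conditions `(ΔΦ)₀ = (D₀ΔΦ)₀ = 0`. -/
theorem five_point_LF_like_type1_extrapolation (z : ℝ) (hz : z ∈ Set.Ioo (0 : ℝ) 1)
    (Φ : ℤ → ℝ) (hΦ : Summable (fun j : {j : ℤ // j ≤ 0} => (Φ j.1) ^ 2))
    (hext1 : Lap Φ 0 = 0) (hext2 : D0Lap Φ 0 = 0) :
    (∑' j : {j : ℤ // j ≤ -1}, (A5 z 0 (-(1 - z ^ 2) / 12) Φ j.1) ^ 2)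
        + 1 / 2 * (A5 z 0 (-(1 - z ^ 2) / 12) Φ 0) ^ 2
      ≤ (∑' j : {j : ℤ // j ≤ -1}, (Φ j.1) ^ 2) + 1 / 2 * (Φ 0) ^ 2 := by
  classical
  set Ψ : ℤ → ℝ := A5 z 0 (-(1 - z ^ 2) / 12) Φ with hΨ
  have ht1 : (∑' j : {j : ℤ // j ≤ -1}, (Ψ j.1) ^ 2)
      = ∑' n : ℕ, (Ψ (-(n:ℤ) - 1)) ^ 2 := tsum_negE (fun j => Ψ j ^ 2)
  have ht2 : (∑' j : {j : ℤ // j ≤ -1}, (Φ j.1) ^ 2)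
      = ∑' n : ℕ, (Φ (-(n:ℤ) - 1)) ^ 2 := tsum_negE (fun j => Φ j ^ 2)
  have hS1 : Summable (fun n : ℕ => (Φ (-(n:ℤ) - 1)) ^ 2) := summable_shift1 (fun j => Φ j ^ 2) hΦ
  have hS0 : Summable (fun n : ℕ => (Φ (-(n:ℤ))) ^ 2) := summable_shift0 (fun j => Φ j ^ 2) hΦ
  -- Φ(-n) → 0
  have h0 : Filter.Tendsto (fun n : ℕ => Φ (-(n:ℤ))) Filter.atTop (nhds 0) := by
    have hsq := hS0.tendsto_atTop_zero
    have habs : Filter.Tendsto (fun n : ℕ => |Φ (-(n:ℤ))|) Filter.atTop (nhds 0) := by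
      have := (Real.continuous_sqrt.tendsto 0).comp hsq
      simpa [Function.comp_def, Real.sqrt_sq_eq_abs] using this
    exact tendsto_of_tendsto_of_tendsto_of_le_of_le (by simpa using habs.neg) habs
      (fun n => neg_abs_le _) (fun n => le_abs_self _)
  have hm1 : Filter.Tendsto (fun n : ℕ => Φ (-(n:ℤ) - 1)) Filter.atTop (nhds 0) := by
    have := h0.comp (Filter.tendsto_add_atTop_nat 1)
    exact this.congr fun n => congrArg Φ (by push_cast [Function.comp_def]; ring)
  have hm2 : Filter.Tendsto (fun n : ℕ => Φ (-(n:ℤ) - 2)) Filter.atTop (nhds 0) := by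
    have := h0.comp (Filter.tendsto_add_atTop_nat 2)
    exact this.congr fun n => congrArg Φ (by push_cast [Function.comp_def]; ring)
  have hp1 : Filter.Tendsto (fun n : ℕ => Φ (-(n:ℤ) + 1)) Filter.atTop (nhds 0) := by
    refine (Filter.tendsto_add_atTop_iff_nat (f := fun n : ℕ => Φ (-(n:ℤ) + 1)) 1).mp ?_
    exact h0.congr fun n => congrArg Φ (by push_cast; ring)
  -- flux tends to 0
  have hE : Filter.Tendsto (fun n : ℕ => Fflux z Φ (-(n:ℤ))) Filter.atTop (nhds 0) := by
    have hc : Continuous (fun p : ℝ × ℝ × ℝ × ℝ =>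
        (-(1 - z ^ 2) ^ 2 / 72) * p.1 ^ 2
      + (1 / 12 + z / 12 - z ^ 2 / 12 - z ^ 3 / 12) * (p.1 * p.2.1)
      + ((1 - z ^ 2) ^ 2 / 12) * (p.1 * p.2.2.1)
      + (1 / 36 - z / 12 + z ^ 2 / 36 + z ^ 3 / 12 - z ^ 4 / 18) * (p.1 * p.2.2.2)
      + (-5 / 24 - z / 3 - 7 * z ^ 2 / 24 - z ^ 3 / 6) * p.2.1 ^ 2
      + (-1 / 12 - 5 * z / 12 + z ^ 2 / 12 + 5 * z ^ 3 / 12) * (p.2.1 * p.2.2.1)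
      + ((z ^ 2 - 1) / 12) * (p.2.1 * p.2.2.2)
      + (3 / 8 - z / 3 + z ^ 2 / 4 - z ^ 3 / 6 - z ^ 4 / 8) * p.2.2.1 ^ 2
      + (-1 / 4 + z / 12 + z ^ 2 / 12 - z ^ 3 / 12 + z ^ 4 / 6) * (p.2.2.1 * p.2.2.2)
      + (5 / 72 - z ^ 2 / 72 - z ^ 4 / 18) * p.2.2.2 ^ 2) := by fun_prop
    have h4 : Filter.Tendsto (fun n : ℕ =>
        ((Φ (-(n:ℤ) - 2), (Φ (-(n:ℤ) - 1), (Φ (-(n:ℤ)), Φ (-(n:ℤ) + 1)))) : ℝ × ℝ × ℝ × ℝ))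
        Filter.atTop (nhds ((0:ℝ), ((0:ℝ), ((0:ℝ), (0:ℝ))))) :=
      hm2.prodMk_nhds (hm1.prodMk_nhds (h0.prodMk_nhds hp1))
    have := (hc.tendsto _).comp h4
    simp only [Function.comp_def] at this
    norm_num at this
    convert this using 2 with n
    simp only [Fflux]
    ring
  -- main bound
  rw [ht1, ht2]
  have hfin : (∑' n : ℕ, (Ψ (-(n:ℤ) - 1)) ^ 2)
      ≤ (∑' n : ℕ, (Φ (-(n:ℤ) - 1)) ^ 2) + 1 / 2 * (Φ 0) ^ 2 - 1 / 2 * (Ψ 0) ^ 2 := by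
    refine le_of_forall_pos_le_add ?_
    intro ε hε
    refine Real.tsum_le_of_sum_range_le (fun n => sq_nonneg _) ?_
    intro N
    obtain ⟨M₀, hM₀⟩ := Metric.tendsto_atTop.mp hE ε hε
    set M := max N M₀ with hM
    have h1 : ∑ n ∈ Finset.range N, (Ψ (-(n:ℤ) - 1)) ^ 2
        ≤ ∑ n ∈ Finset.range M, (Ψ (-(n:ℤ) - 1)) ^ 2 :=
      Finset.sum_le_sum_of_subset_of_nonneg
        (Finset.range_subset_range.mpr (le_max_left _ _)) (fun i _ _ => sq_nonneg _)
    have h2 := key_ineq hz Φ hext1 hext2 M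
    have h3 : ∑ n ∈ Finset.range M, (Φ (-(n:ℤ) - 1)) ^ 2
        ≤ ∑' n : ℕ, (Φ (-(n:ℤ) - 1)) ^ 2 :=
      Summable.sum_le_tsum (Finset.range M) (fun i _ => sq_nonneg _) hS1
    have h4 : |Fflux z Φ (-(M:ℤ))| < ε := by
      have := hM₀ M (le_max_right _ _)
      simpa [Real.dist_eq] using this
    have h5 := abs_lt.mp h4
    simp only [← hΨ] at h2
    linarith [h5.1, h5.2]
  linarith
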